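/- Let S, B_i, B_j be subspaces of ℝ^N each spanned by a subset of the standard orthonormal basis (e_1,…,e_N), and set A'_ij = B_i ⊓ (B_i ⊓ B_j)ᗮ, A'_ji = B_j ⊓ (B_i ⊓ B_j)ᗮ, W = S ⊓ (A'_ij)ᗮ and V = S ⊓ Wᗮ. Then V = S ⊓ A'_ij (so in particular V ≤ A'_ij), and A'_ij ≤ (A'_ji)ᗮ; consequently ⟨x, (P_{A'_ij} − P_{A'_ji})x⟩ = ‖x‖² for every x ∈ V. -/

import Mathlib

/-- The orthogonal projection onto a subspace `S`, viewed as an endomorphism. -/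
noncomputable def projCLM {E : Type*} [NormedAddCommGroup E] [InnerProductSpace ℝ E]
    [FiniteDimensional ℝ E] (S : Submodule ℝ E) : E →L[ℝ] E :=
  S.subtypeL.comp (S.orthogonalProjection)

/-- A coordinate subspace of `ℝ^N`: one spanned by a subset of the standard orthonormal
basis vectors. -/
def IsCoordSubspace {N : ℕ} (S : Submodule ℝ (EuclideanSpace ℝ (Fin N))) : Prop :=
  ∃ I : Set (Fin N),
    S = Submodule.span ℝ ((fun k => EuclideanSpace.single k (1 : ℝ)) '' I)

/-- The submodule of vectors supported on `I`. -/
def coordSub {N : ℕ} (I : Set (Fin N)) : Submodule ℝ (EuclideanSpace ℝ (Fin N)) where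
  carrier := {x | ∀ k ∉ I, x k = 0}
  add_mem' := fun {x y} hx hy k hk => by
    show x k + y k = 0
    rw [hx k hk, hy k hk, add_zero]
  zero_mem' := fun k _ => rfl
  smul_mem' := fun c x hx k hk => by
    show c * x k = 0
    rw [hx k hk, mul_zero]

lemma mem_coordSub {N : ℕ} {I : Set (Fin N)} {x : EuclideanSpace ℝ (Fin N)} :
    x ∈ coordSub I ↔ ∀ k ∉ I, x k = 0 := Iff.rfl

lemma coordSub_mono {N : ℕ} {I J : Set (Fin N)} (h : I ⊆ J) : coordSub I ≤ coordSub J :=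
  fun x hx k hk => hx k (fun hI => hk (h hI))

lemma span_singles {N : ℕ} (I : Set (Fin N)) :
    Submodule.span ℝ ((fun k => EuclideanSpace.single k (1 : ℝ)) '' I) = coordSub I := by
  apply le_antisymm
  · rw [Submodule.span_le]
    rintro _ ⟨k, hk, rfl⟩ j hj
    show EuclideanSpace.single k (1:ℝ) j = 0
    rw [EuclideanSpace.single_apply]
    simp only [ite_eq_right_iff]
    intro h; exact absurd (h ▸ hk) hj
  · intro x hx
    have hxsum : x = ∑ k : Fin N, x k • EuclideanSpace.single k (1 : ℝ) := by
      ext j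
      rw [WithLp.ofLp_sum, Finset.sum_apply]
      simp [EuclideanSpace.single_apply]
    rw [hxsum]
    refine Submodule.sum_mem _ fun k _ => ?_
    by_cases hk : k ∈ I
    · exact Submodule.smul_mem _ _ (Submodule.subset_span ⟨k, hk, rfl⟩)
    · rw [hx k hk, zero_smul]; exact Submodule.zero_mem _

lemma coordSub_orth {N : ℕ} (I : Set (Fin N)) : (coordSub I)ᗮ = coordSub Iᶜ := by
  ext x
  constructor
  · intro hx k hk
    have h1 : EuclideanSpace.single k (1 : ℝ) ∈ coordSub I := by
      intro j hj
      rw [EuclideanSpace.single_apply]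
      simp only [ite_eq_right_iff]
      intro h; exact absurd (h ▸ (not_not.mp hk)) hj
    have := hx _ h1
    rwa [EuclideanSpace.inner_single_left, map_one, one_mul] at this
  · intro hx y hy
    rw [PiLp.inner_apply]
    refine Finset.sum_eq_zero fun k _ => ?_
    by_cases hk : k ∈ I
    · rw [hx k (by simpa using hk)]; simp
    · rw [hy k hk]; simp

lemma coordSub_inf {N : ℕ} (I J : Set (Fin N)) :
    coordSub I ⊓ coordSub J = coordSub (I ∩ J) := by
  ext x
  simp only [Submodule.mem_inf, mem_coordSub, Set.mem_inter_iff]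
  constructor
  · rintro ⟨h1, h2⟩ k hk
    by_cases hI : k ∈ I
    · exact h2 k fun hJ => hk ⟨hI, hJ⟩
    · exact h1 k hI
  · intro h
    exact ⟨fun k hk => h k fun h' => hk h'.1, fun k hk => h k fun h' => hk h'.2⟩

/-- The content of the proof of Corollary 3 of the paper: for coordinate subspaces
(arising from diagonal covariance matrices), `V = S ⊓ A'_ij ≤ A'_ij`,
`A'_ij ≤ (A'_ji)ᗮ`, hence `⟨x, (P_{A'_ij} − P_{A'_ji})x⟩ = ‖x‖²` on `V`. -/
theorem coord_subspace_suff_condition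
    (N : ℕ) (S Bi Bj : Submodule ℝ (EuclideanSpace ℝ (Fin N)))
    (hScoord : IsCoordSubspace S) (hBicoord : IsCoordSubspace Bi)
    (hBjcoord : IsCoordSubspace Bj)
    (Aij Aji W V : Submodule ℝ (EuclideanSpace ℝ (Fin N)))
    (hAij : Aij = Bi ⊓ (Bi ⊓ Bj)ᗮ) (hAji : Aji = Bj ⊓ (Bi ⊓ Bj)ᗮ)
    (hW : W = S ⊓ Aijᗮ) (hV : V = S ⊓ Wᗮ) :
    V = S ⊓ Aij ∧ Aij ≤ Ajiᗮ ∧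
      ∀ x ∈ V, (inner ℝ x ((projCLM Aij - projCLM Aji) x) : ℝ) = ‖x‖ ^ 2 := by
  obtain ⟨s, hs⟩ := hScoord
  obtain ⟨bi, hbi⟩ := hBicoord
  obtain ⟨bj, hbj⟩ := hBjcoord
  rw [span_singles] at hs hbi hbj
  subst hs hbi hbj hAij hAji hW hV
  have hAij' : coordSub bi ⊓ (coordSub bi ⊓ coordSub bj)ᗮ
      = coordSub (bi ∩ (bi ∩ bj)ᶜ) := by
    rw [coordSub_inf, coordSub_orth, coordSub_inf]
  have hAji' : coordSub bj ⊓ (coordSub bi ⊓ coordSub bj)ᗮ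
      = coordSub (bj ∩ (bi ∩ bj)ᶜ) := by
    rw [coordSub_inf, coordSub_orth, coordSub_inf]
  set a : Set (Fin N) := bi ∩ (bi ∩ bj)ᶜ with ha
  have hV' : coordSub s ⊓ (coordSub s ⊓ (coordSub bi ⊓ (coordSub bi ⊓ coordSub bj)ᗮ)ᗮ)ᗮ
      = coordSub s ⊓ (coordSub bi ⊓ (coordSub bi ⊓ coordSub bj)ᗮ) := by
    rw [hAij', coordSub_orth, coordSub_inf, coordSub_orth, coordSub_inf]
    have hset : s ∩ (s ∩ aᶜ)ᶜ = s ∩ a := by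
      ext k; by_cases hk : k ∈ s <;> by_cases hk2 : k ∈ a <;> simp [hk, hk2]
    rw [hset, coordSub_inf]
  have hle : coordSub bi ⊓ (coordSub bi ⊓ coordSub bj)ᗮ
      ≤ (coordSub bj ⊓ (coordSub bi ⊓ coordSub bj)ᗮ)ᗮ := by
    rw [hAij', hAji', coordSub_orth]
    apply coordSub_mono
    intro k hk
    simp only [Set.mem_inter_iff, Set.mem_compl_iff, not_and] at *
    intro hkj
    exact absurd ⟨hk.1, hkj⟩ hk.2
  refine ⟨hV', hle, fun x hx => ?_⟩
  rw [hV'] at hx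
  have hxA : x ∈ coordSub bi ⊓ (coordSub bi ⊓ coordSub bj)ᗮ := hx.2
  have hxAo : x ∈ (coordSub bj ⊓ (coordSub bi ⊓ coordSub bj)ᗮ)ᗮ := hle hxA
  simp only [ContinuousLinearMap.sub_apply, projCLM, ContinuousLinearMap.comp_apply,
    Submodule.subtypeL_apply]
  rw [← Submodule.starProjection_apply, Submodule.starProjection_eq_self_iff.mpr hxA,
    Submodule.orthogonalProjectionOnto_apply_of_mem_orthogonal hxAo]
  rw [ZeroMemClass.coe_zero, sub_zero]
  exact real_inner_self_eq_norm_sq x
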